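/- For the formula F(x,y,z,w) = R(x,y,z) ∧ R(y,x,w) where R(a,b,c) = ((a∨¬b)∧¬c) ∨ (¬a∧b∧c), the solution set is exactly {0000, 1100, 0110, 1001}, these four solutions are pairwise disconnected in the solution graph of F, yet 0000 and 1100 are connected in the solution graph of the projection of [F] onto {x,y,z} and also in the projection onto {x,y,w}. -/
import Mathlib


def Reach {ι : Type*} [Fintype ι] (S : Set (ι → Bool)) : (ι → Bool) → (ι → Bool) → Prop :=
  Relation.ReflTransGen (fun u v => u ∈ S ∧ v ∈ S ∧ hammingDist u v = 1)

/-- R(a,b,c) = ((a ∨ ¬b) ∧ ¬c) ∨ (¬a ∧ b ∧ c). -/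
def Rrel (a b c : Bool) : Bool := ((a || !b) && !c) || (!a && b && c)

private lemma rtg_empty {α : Type*} {r : α → α → Prop} (h : ∀ u v, ¬ r u v)
    {a b : α} (hab : Relation.ReflTransGen r a b) : a = b := by
  induction hab with
  | refl => rfl
  | tail _ hs ih => exact absurd hs (h _ _)

theorem F_components_not_separated_by_projections :
    -- variables (x,y,z,w) = (s 0, s 1, s 2, s 3)
    let F : Set (Fin 4 → Bool) :=
      {s | (Rrel (s 0) (s 1) (s 2) && Rrel (s 1) (s 0) (s 3)) = true}
    let ProjXYZ : Set (Fin 3 → Bool) := {p | ∃ s ∈ F, p 0 = s 0 ∧ p 1 = s 1 ∧ p 2 = s 2}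
    let ProjXYW : Set (Fin 3 → Bool) := {p | ∃ s ∈ F, p 0 = s 0 ∧ p 1 = s 1 ∧ p 2 = s 3}
    -- the solution set is exactly {0000, 1100, 0110, 1001}
    F = {![false,false,false,false], ![true,true,false,false],
         ![false,true,true,false], ![true,false,false,true]} ∧
    -- the four solutions are pairwise disconnected in G(F)
    (∀ a ∈ F, ∀ b ∈ F, a ≠ b → ¬ Reach F a b) ∧
    -- yet 0000 and 1100 are connected in the projection onto {x,y,z}
    Reach ProjXYZ ![false,false,false] ![true,true,false] ∧
    -- and also in the projection onto {x,y,w}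
    Reach ProjXYW ![false,false,false] ![true,true,false] := by
  intro F ProjXYZ ProjXYW
  refine ⟨?_, ?_, ?_, ?_⟩
  · ext s
    revert s
    decide
  · intro a ha b hb hne hr
    exact hne (rtg_empty (by decide : ∀ u v : Fin 4 → Bool,
      ¬ (u ∈ F ∧ v ∈ F ∧ hammingDist u v = 1)) hr)
  · have h1 : (![false,false,false] : Fin 3 → Bool) ∈ ProjXYZ :=
      ⟨![false,false,false,false], by decide, by decide⟩
    have h2 : (![true,false,false] : Fin 3 → Bool) ∈ ProjXYZ :=
      ⟨![true,false,false,true], by decide, by decide⟩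
    have h3 : (![true,true,false] : Fin 3 → Bool) ∈ ProjXYZ :=
      ⟨![true,true,false,false], by decide, by decide⟩
    exact Relation.ReflTransGen.head ⟨h1, h2, by decide⟩
      (Relation.ReflTransGen.single ⟨h2, h3, by decide⟩)
  · have h1 : (![false,false,false] : Fin 3 → Bool) ∈ ProjXYW :=
      ⟨![false,false,false,false], by decide, by decide⟩
    have h2 : (![false,true,false] : Fin 3 → Bool) ∈ ProjXYW :=
      ⟨![false,true,true,false], by decide, by decide⟩
    have h3 : (![true,true,false] : Fin 3 → Bool) ∈ ProjXYW :=
      ⟨![true,true,false,false], by decide, by decide⟩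
    exact Relation.ReflTransGen.head ⟨h1, h2, by decide⟩
      (Relation.ReflTransGen.single ⟨h2, h3, by decide⟩)
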